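/- For every z > 0, the quantity h'(z) := -A'(√z)/(16·√z·A(√z)³) is strictly positive and strictly less than 1, where A(x) = -tanh(x/2)/(4x) with derivative A'. -/

import Mathlib

noncomputable def Afun (x : ℝ) : ℝ := -(Real.tanh (x/2))/(4*x)

lemma sinh_lt_mul_cosh {y : ℝ} (hy : 0 < y) : Real.sinh y < y * Real.cosh y := by
  have h : StrictMonoOn (fun t => t * Real.cosh t - Real.sinh t) (Set.Ici 0) := by
    apply strictMonoOn_of_deriv_pos (convex_Ici 0)
    · fun_prop
    · intro t ht
      rw [interior_Ici, Set.mem_Ioi] at ht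
      have hd : HasDerivAt (fun t => t * Real.cosh t - Real.sinh t)
          (1 * Real.cosh t + t * Real.sinh t - Real.cosh t) t :=
        ((hasDerivAt_id t).mul (Real.hasDerivAt_cosh t)).sub (Real.hasDerivAt_sinh t)
      rw [hd.deriv]
      have hs : 0 < Real.sinh t := Real.sinh_pos_iff.2 ht
      nlinarith
  have := h (Set.mem_Ici.2 le_rfl) (Set.mem_Ici.2 hy.le) hy
  simp only [Real.sinh_zero, Real.cosh_zero, zero_mul, sub_zero] at this
  linarith

lemma deriv_Afun {x : ℝ} (hx : 0 < x) :
    deriv Afun x = (Real.sinh x - x) / (8 * x^2 * (Real.cosh (x/2))^2) := by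
  have hc : (0:ℝ) < Real.cosh (x/2) := Real.cosh_pos _
  have hAeq : Afun = fun x => -Real.sinh (x/2) / (4 * x * Real.cosh (x/2)) := by
    funext y
    have hcy : Real.cosh (y/2) ≠ 0 := (Real.cosh_pos _).ne'
    simp only [Afun, Real.tanh_eq_sinh_div_cosh, div_div, neg_div]
    ring_nf
  have h1 : HasDerivAt (fun y => Real.sinh (y/2)) (Real.cosh (x/2) * (1/2)) x := by
    have := (Real.hasDerivAt_sinh (x/2)).comp x ((hasDerivAt_id x).div_const 2)
    simpa [Function.comp_def] using this
  have h2 : HasDerivAt (fun y => Real.cosh (y/2)) (Real.sinh (x/2) * (1/2)) x := by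
    have := (Real.hasDerivAt_cosh (x/2)).comp x ((hasDerivAt_id x).div_const 2)
    simpa [Function.comp_def] using this
  have hden : HasDerivAt (fun y => 4 * y * Real.cosh (y/2))
      (4 * Real.cosh (x/2) + 4 * x * (Real.sinh (x/2) * (1/2))) x := by
    have := (((hasDerivAt_id x).const_mul 4).mul h2)
    simpa [Pi.mul_def] using this
  have hdne : 4 * x * Real.cosh (x/2) ≠ 0 := by positivity
  have hg := (h1.neg.div hden hdne)
  rw [hAeq, show (fun x => -Real.sinh (x/2) / (4 * x * Real.cosh (x/2))) = ((-fun y => Real.sinh (y/2)) / fun y => 4 * y * Real.cosh (y/2)) from rfl, hg.deriv, Pi.neg_apply]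
  have hsx : Real.sinh x = 2 * Real.sinh (x/2) * Real.cosh (x/2) := by
    have := Real.sinh_two_mul (x/2)
    rw [show 2 * (x/2) = x by ring] at this
    rw [this]
  have hc2 : Real.cosh (x/2)^2 = Real.sinh (x/2)^2 + 1 := Real.cosh_sq (x/2)
  rw [hsx]
  field_simp
  linear_combination (-8*x) * hc2

theorem stmt7 (z : ℝ) (hz : 0 < z) :
    0 < -(deriv Afun (Real.sqrt z)) / (16 * Real.sqrt z * (Afun (Real.sqrt z))^3) ∧
    -(deriv Afun (Real.sqrt z)) / (16 * Real.sqrt z * (Afun (Real.sqrt z))^3) < 1 := by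
  set x := Real.sqrt z with hxdef
  have hx : 0 < x := Real.sqrt_pos.2 hz
  set s := Real.sinh (x/2) with hsdef
  set c := Real.cosh (x/2) with hcdef
  have hs : 0 < s := Real.sinh_pos_iff.2 (by positivity)
  have hc : 0 < c := Real.cosh_pos _
  have hsx : Real.sinh x = 2 * s * c := by
    have := Real.sinh_two_mul (x/2)
    rw [show 2 * (x/2) = x by ring] at this
    simpa using this
  have hc2 : c^2 = s^2 + 1 := Real.cosh_sq (x/2)
  have hA : Afun x = -(s/c) / (4*x) := by
    simp only [Afun, Real.tanh_eq_sinh_div_cosh]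
    rfl
  have hE : -(deriv Afun x) / (16 * x * (Afun x)^3)
      = (Real.sinh x - x) * c / (2 * s^3) := by
    rw [deriv_Afun hx, hA, ← hcdef]
    field_simp [hx.ne', hs.ne', hc.ne']
    ring
  have hlt : x < Real.sinh x := Real.self_lt_sinh_iff.2 hx
  have h2s : 2 * s < x * c := by
    have := sinh_lt_mul_cosh (y := x/2) (by positivity)
    rw [← hsdef, ← hcdef] at this
    linarith
  constructor
  · rw [hE]
    exact div_pos (by nlinarith) (by positivity)
  · rw [hE, div_lt_one (by positivity), hsx]
    nlinarith
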